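/- Define f, g : ℝ → ℝ by f(x) = −e^{10x} + e^{6x} + e^{4x} and g(x) = −e^{−10x} + e^{−6x} + e^{−4x} (so g(x) = f(−x)), and for n ≥ 0 set vₙ(f) = f⁽ⁿ⁾(0)/n! and vₙ(g) = g⁽ⁿ⁾(0)/n!, the n-th Taylor coefficients at 0. Then v₀(f) = v₀(g) = 1, v₁(f) = v₁(g) = 0, v₂(f) = v₂(g) = −24, while v₃(f) = −120 and v₃(g) = 120; in particular, n = 3 is the least index at which the Taylor coefficients of f and g differ. -/

import Mathlib

/-- `f(x) = −e^{10x} + e^{6x} + e^{4x}`, the normalized bracket of the knotoid `K`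
evaluated at `A = eˣ`. -/
noncomputable def fK (x : ℝ) : ℝ :=
  -Real.exp (10 * x) + Real.exp (6 * x) + Real.exp (4 * x)

/-- `g(x) = −e^{−10x} + e^{−6x} + e^{−4x}`, the corresponding series for the mirror
image `K*`. -/
noncomputable def gK (x : ℝ) : ℝ :=
  -Real.exp (-10 * x) + Real.exp (-6 * x) + Real.exp (-4 * x)

/-- The `n`-th Taylor coefficient at `0` of a function `h : ℝ → ℝ`,
`vₙ(h) = h⁽ⁿ⁾(0)/n!`. -/
noncomputable def taylorCoeff (n : ℕ) (h : ℝ → ℝ) : ℝ :=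
  iteratedDeriv n h 0 / n.factorial

lemma iteratedDeriv_add' {n : ℕ} {f g : ℝ → ℝ} (hf : ContDiff ℝ n f) (hg : ContDiff ℝ n g)
    (x : ℝ) : iteratedDeriv n (fun y => f y + g y) x = iteratedDeriv n f x + iteratedDeriv n g x := by
  simp_rw [← iteratedDerivWithin_univ]
  exact iteratedDerivWithin_add (Set.mem_univ x) uniqueDiffOn_univ hf.contDiffWithinAt hg.contDiffWithinAt

lemma contDiff_expMul (c : ℝ) (n : ℕ) : ContDiff ℝ n (fun x => Real.exp (c * x)) :=
  (Real.contDiff_exp.comp ((contDiff_const.mul contDiff_id))).of_le le_top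

lemma iteratedDeriv_three_exp (a b c : ℝ) (n : ℕ) :
    iteratedDeriv n (fun x => -Real.exp (a * x) + Real.exp (b * x) + Real.exp (c * x)) 0 =
      -(a ^ n) + b ^ n + c ^ n := by
  have h1 : (fun x => -Real.exp (a * x) + Real.exp (b * x) + Real.exp (c * x)) =
      (fun x => (-Real.exp (a * x) + Real.exp (b * x)) + Real.exp (c * x)) := by
    funext x; ring
  rw [h1, iteratedDeriv_add' (((contDiff_expMul a n).neg).add (contDiff_expMul b n))
      (contDiff_expMul c n),
    iteratedDeriv_add' ((contDiff_expMul a n).neg) (contDiff_expMul b n),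
    iteratedDeriv_fun_neg, iteratedDeriv_exp_const_mul, iteratedDeriv_exp_const_mul,
    iteratedDeriv_exp_const_mul]
  simp

lemma tc_fK (n : ℕ) : taylorCoeff n fK = (-(10 ^ n : ℝ) + 6 ^ n + 4 ^ n) / n.factorial := by
  unfold taylorCoeff fK
  rw [iteratedDeriv_three_exp 10 6 4 n]

lemma tc_gK (n : ℕ) :
    taylorCoeff n gK = (-((-10 : ℝ) ^ n) + (-6 : ℝ) ^ n + (-4 : ℝ) ^ n) / n.factorial := by
  unfold taylorCoeff gK
  rw [iteratedDeriv_three_exp (-10) (-6) (-4) n]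

/-- `g(x) = f(−x)`; the Taylor coefficients satisfy `v₀(f) = v₀(g) = 1`,
`v₁(f) = v₁(g) = 0`, `v₂(f) = v₂(g) = −24`, `v₃(f) = −120`, `v₃(g) = 120`; and
`n = 3` is the least index at which the Taylor coefficients of `f` and `g` differ. -/
theorem v3_distinguishes_knotoid_from_mirror :
    (∀ x : ℝ, gK x = fK (-x)) ∧
    taylorCoeff 0 fK = 1 ∧ taylorCoeff 0 gK = 1 ∧
    taylorCoeff 1 fK = 0 ∧ taylorCoeff 1 gK = 0 ∧
    taylorCoeff 2 fK = -24 ∧ taylorCoeff 2 gK = -24 ∧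
    taylorCoeff 3 fK = -120 ∧ taylorCoeff 3 gK = 120 ∧
    IsLeast {n : ℕ | taylorCoeff n fK ≠ taylorCoeff n gK} 3 := by
  refine ⟨fun x => by simp [fK, gK, mul_comm], ?_, ?_, ?_, ?_, ?_, ?_, ?_, ?_, ?_, ?_⟩
  · rw [tc_fK]; norm_num
  · rw [tc_gK]; norm_num
  · rw [tc_fK]; norm_num
  · rw [tc_gK]; norm_num
  · rw [tc_fK]; norm_num
  · rw [tc_gK]; norm_num
  · rw [tc_fK]; norm_num [Nat.factorial]
  · rw [tc_gK]; norm_num [Nat.factorial]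
  · simp only [Set.mem_setOf_eq, tc_fK, tc_gK]; norm_num [Nat.factorial]
  · intro n hn
    by_contra h
    push_neg at h
    interval_cases n <;> simp [tc_fK, tc_gK] at hn <;> norm_num at hn
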